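/- For every r ≥ 1, the polynomial d(z) = z³ - 2z^{r+3} + z² + z - 1 has a root ρ in the interval (1/2, 3/4), satisfies d(z) < 0 for all z in (-1, 0), d(0) = -1, and d'(z) > 0 for z ∈ [0, 1/2]; consequently ρ is the real root of d of smallest absolute value. -/

import Mathlib

/-- d(z) = z³ - 2z^{r+3} + z² + z - 1. -/
def dOdd (r : ℕ) (z : ℝ) : ℝ := z ^ 3 - 2 * z ^ (r + 3) + z ^ 2 + z - 1

lemma dOdd_neg_on_neg (r : ℕ) {z : ℝ} (h1 : -1 < z) (h2 : z < 0) : dOdd r z < 0 := by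
  have hz : |z| < 1 := abs_lt.2 ⟨h1, h2.trans one_pos⟩
  have habs : ∀ n : ℕ, z ^ n ≤ 1 := fun n =>
    le_trans (le_abs_self _) (by rw [abs_pow]; exact pow_le_one₀ (abs_nonneg z) hz.le)
  have hlt : z ^ (r + 2) < 1 :=
    lt_of_le_of_lt (le_abs_self _) (by rw [abs_pow]; exact pow_lt_one₀ (abs_nonneg z) hz (by omega))
  have hid : dOdd r z = z ^ 3 * (1 - z ^ r) + z * (1 - z ^ (r + 2)) + (z ^ 2 - 1) := by
    unfold dOdd; ring
  have h3 : z ^ 3 < 0 := Odd.pow_neg (by decide) h2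
  have hsq : z ^ 2 < 1 := lt_of_le_of_lt (le_abs_self _)
    (by rw [abs_pow]; exact pow_lt_one₀ (abs_nonneg z) hz (by omega))
  have t1 : z ^ 3 * (1 - z ^ r) ≤ 0 := mul_nonpos_of_nonpos_of_nonneg h3.le (by linarith [habs r])
  have t2 : z * (1 - z ^ (r + 2)) < 0 := mul_neg_of_neg_of_pos h2 (by linarith)
  linarith [hid ▸ (by linarith : z ^ 3 * (1 - z ^ r) + z * (1 - z ^ (r + 2)) + (z ^ 2 - 1) < 0)]

lemma coef_le (r : ℕ) (hr : 1 ≤ r) : ((r : ℝ) + 3) * (3 / 4) ^ r ≤ 3 := by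
  induction r, hr using Nat.le_induction with
  | base => norm_num
  | succ n hn ih =>
    have hpow : (0 : ℝ) ≤ (3 / 4 : ℝ) ^ n := by positivity
    push_cast
    rw [pow_succ]
    nlinarith [mul_nonneg (Nat.cast_nonneg n : (0:ℝ) ≤ (n:ℝ)) hpow]

lemma dOdd_deriv (r : ℕ) (z : ℝ) :
    deriv (dOdd r) z = 3 * z ^ 2 - 2 * ((r : ℝ) + 3) * z ^ (r + 2) + 2 * z + 1 := by
  have h : HasDerivAt (dOdd r)
      (((3 : ℕ) : ℝ) * z ^ 2 - 2 * (((r + 3 : ℕ) : ℝ) * z ^ (r + 2)) + ((2 : ℕ) : ℝ) * z ^ 1 + 1) z := by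
    have h1 := hasDerivAt_pow 3 z
    have h2 := (hasDerivAt_pow (r + 3) z).const_mul (2 : ℝ)
    have h3 := hasDerivAt_pow 2 z
    have h4 := hasDerivAt_id z
    have h := (((h1.sub h2).add h3).add h4).sub_const (1 : ℝ)
    exact (h.congr_deriv (by norm_num)).congr_of_eventuallyEq
      (Filter.Eventually.of_forall fun x => by simp only [dOdd, Pi.add_apply, Pi.sub_apply, id])
  rw [h.deriv]; push_cast; ring

lemma dOdd_deriv_pos (r : ℕ) (hr : 1 ≤ r) {z : ℝ} (h0 : 0 ≤ z) (h1 : z ≤ 3 / 4) :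
    0 < deriv (dOdd r) z := by
  rw [dOdd_deriv]
  have hzr : z ^ r ≤ (3 / 4 : ℝ) ^ r := pow_le_pow_left₀ h0 h1 r
  have hc := coef_le r hr
  have hr0 : (0 : ℝ) ≤ (r : ℝ) + 3 := by positivity
  have key : 2 * ((r : ℝ) + 3) * z ^ (r + 2) ≤ 6 * z ^ 2 := by
    have he : z ^ (r + 2) = z ^ r * z ^ 2 := by ring
    rw [he]
    have h1' : ((r : ℝ) + 3) * z ^ r ≤ 3 :=
      le_trans (mul_le_mul_of_nonneg_left hzr hr0) hc
    nlinarith [sq_nonneg z, pow_nonneg h0 r]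
  nlinarith [mul_nonneg h0 (sub_nonneg.2 h1)]

lemma dOdd_cont (r : ℕ) : Continuous (dOdd r) := by
  unfold dOdd; continuity

theorem dOdd_smallest_root (r : ℕ) (hr : 1 ≤ r) :
    (∀ z ∈ Set.Ioo (-1 : ℝ) 0, dOdd r z < 0) ∧
    dOdd r 0 = -1 ∧
    (∀ z ∈ Set.Icc (0 : ℝ) (1 / 2), 0 < deriv (dOdd r) z) ∧
    (∃ ρ ∈ Set.Ioo (1 / 2 : ℝ) (3 / 4), dOdd r ρ = 0 ∧
      ∀ z : ℝ, dOdd r z = 0 → |ρ| ≤ |z|) := by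
  have hzero : dOdd r 0 = -1 := by simp [dOdd]
  have hmono : StrictMonoOn (dOdd r) (Set.Icc 0 (3 / 4)) := by
    apply strictMonoOn_of_deriv_pos (convex_Icc _ _) (dOdd_cont r).continuousOn
    intro x hx
    rw [interior_Icc] at hx
    exact dOdd_deriv_pos r hr hx.1.le hx.2.le
  have h12 : dOdd r (1 / 2) < 0 := by
    have hp : (0 : ℝ) < (1 / 2 : ℝ) ^ (r + 3) := by positivity
    unfold dOdd; nlinarith
  have h34 : 0 < dOdd r (3 / 4) := by
    have hp : (3 / 4 : ℝ) ^ r ≤ 3 / 4 := by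
      calc (3 / 4 : ℝ) ^ r ≤ (3 / 4 : ℝ) ^ 1 := pow_le_pow_of_le_one (by norm_num) (by norm_num) hr
      _ = 3 / 4 := pow_one _
    have he : (3 / 4 : ℝ) ^ (r + 3) = (3 / 4 : ℝ) ^ r * (27 / 64) := by
      rw [pow_add]; norm_num
    have hp0 : (0 : ℝ) ≤ (3 / 4 : ℝ) ^ r := by positivity
    unfold dOdd
    rw [he]
    nlinarith
  obtain ⟨ρ, hρmem, hρ0⟩ :=
    intermediate_value_Ioo (by norm_num : (1 / 2 : ℝ) ≤ 3 / 4) (dOdd_cont r).continuousOn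
      (Set.mem_Ioo.2 ⟨h12, h34⟩)
  refine ⟨fun z hz => dOdd_neg_on_neg r hz.1 hz.2, hzero, ?_, ρ, hρmem, hρ0, ?_⟩
  · intro z hz
    exact dOdd_deriv_pos r hr hz.1 (by linarith [hz.2])
  · intro z hdz
    by_contra hcon
    push_neg at hcon
    have hρpos : 0 < ρ := by linarith [hρmem.1]
    have hρabs : |ρ| = ρ := abs_of_pos hρpos
    rw [hρabs] at hcon
    have hz1 : -ρ < z := by cases abs_lt.1 hcon; linarith [abs_lt.1 hcon]
    have hz2 : z < ρ := (abs_lt.1 hcon).2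
    rcases lt_trichotomy z 0 with h | h | h
    · have : dOdd r z < 0 := dOdd_neg_on_neg r (by linarith [hρmem.2, (abs_lt.1 hcon).1]) h
      linarith [this, hdz ▸ this]
    · rw [h, hzero] at hdz; norm_num at hdz
    · have hlt : dOdd r z < dOdd r ρ :=
        hmono ⟨h.le, by linarith [hρmem.2]⟩ ⟨hρpos.le, hρmem.2.le⟩ hz2
      rw [hρ0, hdz] at hlt
      exact lt_irrefl 0 hlt
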